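/- arXiv:2004.03899 — 3 statements merged into one kernel-verified Lean document; each statement's English description precedes it below -/
import Mathlib

section
/- Let N ≥ 3 and let K(x,y) = |x|^{−(N−2)} P(x/|x|², y) be the Kelvin transform of the Poisson kernel P of the unit ball, for |x| > 1 and |y| = 1. Then |x·∇_x K(x,y)| ≤ N · (|x|/(|x|−1)) · K(x,y). -/
open Real RealInnerProductSpace

lemma ineq_stmt6 (N : ℕ) (hN : 3 ≤ N) (c r d s : ℝ) (hc : 0 < c) (hr : 1 < r) (hd : 0 < d)
    (hd2 : d^2 = r^2 - 2*s + 1) (hs : |s| ≤ r) :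
    |c * (2*r^2 * (d^N)⁻¹ + (r^2-1) * ((-(N:ℝ)/2) * (d^(N+2))⁻¹ * (2*(r^2-s))))|
      ≤ (N:ℝ) * (r/(r-1)) * (c*((r^2-1) * (d^N)⁻¹)) := by
  obtain ⟨hs1, hs2⟩ := abs_le.mp hs
  have hN3 : (3:ℝ) ≤ (N:ℝ) := by exact_mod_cast hN
  have hd2pos : (0:ℝ) < d^2 := by positivity
  have hu : (0:ℝ) < d^N := by positivity
  have key : |2*r^2 - (N:ℝ)*((r^2-1)*(r^2-s))/d^2| ≤ (N:ℝ)*(r*(r+1)) := by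
    rw [abs_le]
    constructor
    · have h : (N:ℝ)*((r^2-1)*(r^2-s))/d^2 ≤ 2*r^2 + (N:ℝ)*(r*(r+1)) := by
        rw [div_le_iff₀ hd2pos, hd2]
        have hp : (0:ℝ) < r^2 - 2*s + 1 := hd2 ▸ hd2pos
        nlinarith [mul_nonneg (mul_nonneg (by linarith : (0:ℝ) ≤ (N:ℝ)) (sq_nonneg (r+1)))
          (by linarith : (0:ℝ) ≤ r - s),
          mul_nonneg (by positivity : (0:ℝ) ≤ 2*r^2) hp.le]
      linarith
    · have h1 : 0 ≤ (N:ℝ)*((r^2-1)*(r^2-s))/d^2 := by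
        apply div_nonneg _ hd2pos.le
        have e1 : (0:ℝ) ≤ r^2 - 1 := by nlinarith
        have e2 : (0:ℝ) ≤ r^2 - s := by nlinarith
        have e3 : (0:ℝ) ≤ (N:ℝ) := by linarith
        exact mul_nonneg e3 (mul_nonneg e1 e2)
      nlinarith
  have heq : c * (2*r^2 * (d^N)⁻¹ + (r^2-1) * ((-(N:ℝ)/2) * (d^(N+2))⁻¹ * (2*(r^2-s))))
      = c * (d^N)⁻¹ * (2*r^2 - (N:ℝ)*((r^2-1)*(r^2-s))/d^2) := by
    rw [pow_add]
    field_simp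
    ring
  have heq2 : (N:ℝ) * (r/(r-1)) * (c*((r^2-1) * (d^N)⁻¹))
      = c * (d^N)⁻¹ * ((N:ℝ)*(r*(r+1))) := by
    have : r - 1 ≠ 0 := by linarith
    field_simp
    ring
  rw [heq, heq2, abs_mul, abs_of_pos (by positivity : (0:ℝ) < c * (d^N)⁻¹)]
  exact mul_le_mul_of_nonneg_left key (by positivity)

lemma rpowKey_stmt6 (d : ℝ) (hd : 0 < d) (n : ℕ) : (d^2 : ℝ) ^ (-(n:ℝ)/2) = (d^n)⁻¹ := by
  have h : (d^2 : ℝ) ^ (-(n:ℝ)/2) = d ^ ((2:ℝ) * (-(n:ℝ)/2)) := by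
    rw [Real.rpow_mul hd.le, Real.rpow_two]
  rw [h, (by ring : (2:ℝ) * (-(n:ℝ)/2) = -(n:ℝ)), Real.rpow_neg hd.le, Real.rpow_natCast]

lemma Keq_stmt6 (N : ℕ) (hN : 3 ≤ N) (c : ℝ) (y z : EuclideanSpace ℝ (Fin N)) (hy : ‖y‖ = 1)
    (hz : 1 < ‖z‖) :
    (‖z‖ ^ (N - 2))⁻¹ * (c * (1 - ‖(‖z‖ ^ 2)⁻¹ • z‖ ^ 2) / ‖(‖z‖ ^ 2)⁻¹ • z - y‖ ^ N)
    = c * ((‖z‖^2 - 1) * ((‖z - y‖^2) ^ (-(N:ℝ)/2))) := by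
  have hr0 : (0:ℝ) < ‖z‖ := by linarith
  have hzy : z ≠ y := by
    intro h; rw [h, hy] at hz; linarith
  have hd : (0:ℝ) < ‖z - y‖ := norm_pos_iff.mpr (sub_ne_zero_of_ne hzy)
  have h1 : ‖(‖z‖^2)⁻¹ • z‖ = ‖z‖⁻¹ := by
    rw [norm_smul, Real.norm_eq_abs, abs_inv, abs_pow, abs_norm, sq, mul_inv]
    field_simp
  have h2 : ‖(‖z‖^2)⁻¹ • z - y‖ = ‖z - y‖ / ‖z‖ := by
    have e1 : ‖(‖z‖^2)⁻¹ • z - y‖^2 = (‖z - y‖ / ‖z‖)^2 := by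
      rw [div_pow, @norm_sub_sq_real, @norm_sub_sq_real, h1, real_inner_smul_left, hy]
      field_simp
      ring
    calc ‖(‖z‖^2)⁻¹ • z - y‖ = Real.sqrt (‖(‖z‖^2)⁻¹ • z - y‖^2) :=
          (Real.sqrt_sq (norm_nonneg _)).symm
      _ = Real.sqrt ((‖z - y‖ / ‖z‖)^2) := by rw [e1]
      _ = ‖z - y‖ / ‖z‖ := Real.sqrt_sq (by positivity)
  rw [h1, h2, rpowKey_stmt6 _ hd]
  obtain ⟨M, rfl⟩ : ∃ M, N = M + 2 := ⟨N - 2, by omega⟩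
  simp only [Nat.add_sub_cancel]
  rw [div_pow]
  field_simp
  ring

theorem stmt_6 (N : ℕ) (hN : 3 ≤ N) (c : ℝ) (hc : 0 < c)
    (y : EuclideanSpace ℝ (Fin N)) (hy : ‖y‖ = 1)
    (K : EuclideanSpace ℝ (Fin N) → ℝ)
    (hK : ∀ x : EuclideanSpace ℝ (Fin N),
      K x = (‖x‖ ^ (N - 2))⁻¹ *
        (c * (1 - ‖(‖x‖ ^ 2)⁻¹ • x‖ ^ 2) / ‖(‖x‖ ^ 2)⁻¹ • x - y‖ ^ N))
    (x : EuclideanSpace ℝ (Fin N)) (hx : 1 < ‖x‖) :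
    |fderiv ℝ K x x| ≤ N * (‖x‖ / (‖x‖ - 1)) * K x := by
  have hxy : x ≠ y := by intro h; rw [h, hy] at hx; linarith
  have hd : (0:ℝ) < ‖x - y‖ := norm_pos_iff.mpr (sub_ne_zero_of_ne hxy)
  -- K agrees with g near x
  set g : EuclideanSpace ℝ (Fin N) → ℝ :=
    fun z => c * ((‖z‖^2 - 1) * ((‖z - y‖^2) ^ (-(N:ℝ)/2))) with hg_def
  have hKg : K =ᶠ[nhds x] g := by
    have hopen : IsOpen {z : EuclideanSpace ℝ (Fin N) | 1 < ‖z‖} :=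
      isOpen_lt continuous_const continuous_norm
    filter_upwards [hopen.mem_nhds hx] with z hz
    rw [hK z]
    exact Keq_stmt6 N hN c y z hy hz
  -- derivative of g
  have hq : HasFDerivAt (fun z : EuclideanSpace ℝ (Fin N) => ‖z - y‖ ^ 2)
      (2 • (innerSL ℝ (x - y))) x := by
    simpa using ((hasFDerivAt_id x).sub_const y).norm_sq
  have hB := hq.rpow_const (p := -(N:ℝ)/2) (Or.inl (by positivity))
  have hA : HasFDerivAt (fun z : EuclideanSpace ℝ (Fin N) => ‖z‖ ^ 2 - 1)
      (2 • (innerSL ℝ x)) x := by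
    simpa using (hasFDerivAt_id x).norm_sq.sub_const (1:ℝ)
  have hg := (hA.mul hB).const_mul c
  have hKd := hg.congr_of_eventuallyEq hKg
  have hval : fderiv ℝ K x x
      = c * ((2 * ⟪x, x⟫) * (‖x - y‖ ^ 2) ^ (-(N:ℝ)/2)
          + (‖x‖ ^ 2 - 1) * ((-(N:ℝ)/2) * (‖x - y‖ ^ 2) ^ (-(N:ℝ)/2 - 1) * (2 * ⟪x - y, x⟫))) := by
    rw [hKd.fderiv]
    simp only [ContinuousLinearMap.coe_smul', Pi.smul_apply, ContinuousLinearMap.add_apply,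
      ContinuousLinearMap.smul_apply, innerSL_apply_apply, smul_eq_mul]
    ring
  -- rewrite inner products and rpow
  have hip1 : ⟪x, x⟫ = ‖x‖^2 := real_inner_self_eq_norm_sq x
  have hip2 : ⟪x - y, x⟫ = ‖x‖^2 - ⟪x, y⟫ := by
    rw [inner_sub_left, real_inner_self_eq_norm_sq, real_inner_comm y x]
  have hrp1 : ((‖x - y‖^2 : ℝ)) ^ (-(N:ℝ)/2) = (‖x - y‖^N)⁻¹ := rpowKey_stmt6 _ hd N
  have hrp2 : ((‖x - y‖^2 : ℝ)) ^ (-(N:ℝ)/2 - 1) = (‖x - y‖^(N+2))⁻¹ := by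
    have : (-(N:ℝ)/2 - 1) = -(((N+2:ℕ)):ℝ)/2 := by push_cast; ring
    rw [this, rpowKey_stmt6 _ hd (N+2)]
  have hKx : K x = c * ((‖x‖^2 - 1) * (‖x - y‖^N)⁻¹) := by
    rw [hK x, Keq_stmt6 N hN c y x hy hx, hrp1]
  have hd2 : ‖x - y‖^2 = ‖x‖^2 - 2*⟪x, y⟫ + 1 := by
    rw [@norm_sub_sq_real, hy]; ring
  have hs : |⟪x, y⟫| ≤ ‖x‖ := by
    have := abs_real_inner_le_norm x y
    rwa [hy, mul_one] at this
  rw [hval, hip1, hip2, hrp1, hrp2, hKx]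
  have := ineq_stmt6 N hN c ‖x‖ ‖x - y‖ ⟪x, y⟫ hc hx hd hd2 hs
  calc |c * (2 * ‖x‖ ^ 2 * (‖x - y‖ ^ N)⁻¹ +
        (‖x‖ ^ 2 - 1) * (-(N:ℝ) / 2 * (‖x - y‖ ^ (N + 2))⁻¹ * (2 * (‖x‖ ^ 2 - ⟪x, y⟫))))|
      ≤ (N:ℝ) * (‖x‖/(‖x‖-1)) * (c*((‖x‖^2-1) * (‖x - y‖^N)⁻¹)) := this
    _ = ↑N * (‖x‖ / (‖x‖ - 1)) * (c * ((‖x‖ ^ 2 - 1) * (‖x - y‖ ^ N)⁻¹)) := by ring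
end

section
/- Let 0 ≤ a < 1, 0 ≤ b < 1 with a + b < 1, let γ ≥ 0, T > 0 and δ > 0. Then there exists L* ≥ 1 such that for all L ≥ L*, sup_{0<t<T} e^{−Lt} t^γ ∫_0^t e^{Ls} s^{−a} (t−s)^{−b} ds ≤ δ. -/
open MeasureTheory Set Filter intervalIntegral

lemma exp_neg_le_rpow_neg {ε x : ℝ} (hε0 : 0 < ε) (hε1 : ε ≤ 1) (hx : 0 < x) :
    Real.exp (-x) ≤ x ^ (-ε) := by
  rw [Real.exp_neg, Real.rpow_neg hx.le]
  have hq : x ^ ε ≤ Real.exp x := by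
    rcases le_total x 1 with h | h
    · calc x ^ ε ≤ 1 := Real.rpow_le_one hx.le h hε0.le
        _ ≤ Real.exp x := by nlinarith [Real.add_one_le_exp x]
    · calc x ^ ε ≤ x ^ (1 : ℝ) := Real.rpow_le_rpow_of_exponent_le h hε1
        _ = x := Real.rpow_one x
        _ ≤ Real.exp x := by nlinarith [Real.add_one_le_exp x]
  exact inv_anti₀ (Real.rpow_pos_of_pos hx ε) hq

theorem stmt_10 (a b γ T δ : ℝ) (ha0 : 0 ≤ a) (ha1 : a < 1) (hb0 : 0 ≤ b) (hb1 : b < 1)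
    (hab : a + b < 1) (hγ : 0 ≤ γ) (hT : 0 < T) (hδ : 0 < δ) :
    ∃ Lstar : ℝ, 1 ≤ Lstar ∧ ∀ L : ℝ, Lstar ≤ L → ∀ t ∈ Set.Ioo (0 : ℝ) T,
      Real.exp (-L * t) * t ^ γ *
          ∫ s in Set.Ioo (0 : ℝ) t, Real.exp (L * s) * s ^ (-a) * (t - s) ^ (-b) ≤ δ := by
  have ha1' : 0 < 1 - a := by linarith
  have hb1' : 0 < 1 - b := by linarith
  have hc0 : (0 : ℝ) < γ + 1 - a - b := by linarith
  set ε : ℝ := min (γ + 1 - a - b) (1 - b) / 2 with hεdef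
  have hεmin : 0 < min (γ + 1 - a - b) (1 - b) := lt_min hc0 hb1'
  have hε0 : 0 < ε := by positivity
  have hεb : ε ≤ (1 - b) / 2 := by
    have := min_le_right (γ + 1 - a - b) (1 - b); rw [hεdef]; linarith
  have hεc : ε ≤ (γ + 1 - a - b) / 2 := by
    have := min_le_left (γ + 1 - a - b) (1 - b); rw [hεdef]; linarith
  have hε1 : ε ≤ 1 := by linarith
  set b' : ℝ := b + ε with hb'def
  have hb'0 : 0 ≤ b' := by positivity
  have hb'1 : b' < 1 := by rw [hb'def]; linarith
  have hb'1' : 0 < 1 - b' := by linarith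
  set q : ℝ := γ + (1 - a - b') with hqdef
  have hq0 : 0 < q := by rw [hqdef, hb'def]; linarith
  have hM1 : (1 : ℝ) ≤ max 1 T := le_max_left 1 T
  have hM0 : (0 : ℝ) < max 1 T := lt_of_lt_of_le one_pos hM1
  set C : ℝ := (max 1 T) ^ q / (2 : ℝ) ^ (1 - a - b') * ((1 - a)⁻¹ + (1 - b')⁻¹) with hCdef
  have hC0 : 0 < C := by
    have h1 := Real.rpow_pos_of_pos hM0 q
    have h2 := Real.rpow_pos_of_pos (two_pos (α := ℝ)) (1 - a - b')
    have h3 : 0 < (1 - a)⁻¹ + (1 - b')⁻¹ := by positivity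
    positivity
  -- choose Lstar
  have htend : Tendsto (fun L : ℝ => C * L ^ (-ε)) atTop (nhds 0) := by
    simpa using (tendsto_rpow_neg_atTop hε0).const_mul C
  have hev : ∀ᶠ L in atTop, C * L ^ (-ε) ≤ δ := htend.eventually_le_const hδ
  obtain ⟨N, hN⟩ := eventually_atTop.mp (hev.and (eventually_ge_atTop 1))
  refine ⟨max 1 N, le_max_left 1 N, ?_⟩
  intro L hL t ht
  have hL1 : (1 : ℝ) ≤ L := le_trans (le_max_left 1 N) hL
  have hL0 : 0 < L := lt_of_lt_of_le one_pos hL1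
  obtain ⟨hCL, -⟩ := hN L (le_trans (le_max_right 1 N) hL)
  obtain ⟨ht0, htT⟩ := ht
  set m : ℝ := t / 2 with hmdef
  have hm0 : 0 < m := by positivity
  have hmt : m < t := by rw [hmdef]; linarith
  have htm : t - m = m := by rw [hmdef]; ring
  set h : ℝ → ℝ := fun s => s ^ (-a) * (t - s) ^ (-b') with hhdef
  -- continuity
  have hconth : ContinuousOn h (Set.Ioo 0 t) := by
    apply ContinuousOn.mul
    · exact continuousOn_id.rpow_const fun s hs => Or.inl (ne_of_gt hs.1)
    · exact (continuousOn_const.sub continuousOn_id).rpow_const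
        fun s hs => Or.inl (by exact ne_of_gt (show (0:ℝ) < t - s by linarith [hs.2]))
  -- integrability of majorants
  have int1 : IntegrableOn (fun s : ℝ => s ^ (-a)) (Set.Ioc 0 m) :=
    (intervalIntegral.intervalIntegrable_rpow' (by linarith : (-1 : ℝ) < -a)).1
  have int2 : IntegrableOn (fun s : ℝ => (t - s) ^ (-b')) (Set.Ioc m t) := by
    have h0 := (intervalIntegral.intervalIntegrable_rpow'
      (by linarith : (-1 : ℝ) < -b') (a := 0) (b := m)).comp_sub_left t
    rw [sub_zero, htm] at h0
    exact h0.2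
  -- nonnegativity of h
  have hnonneg : ∀ s : ℝ, 0 < s → s < t → 0 ≤ h s := fun s hs1 hs2 =>
    mul_nonneg (Real.rpow_nonneg hs1.le _) (Real.rpow_nonneg (by linarith) _)
  -- integrability of h on the two pieces
  have hint1 : IntegrableOn h (Set.Ioc 0 m) := by
    apply Integrable.mono' (int1.const_mul (m ^ (-b')))
      ((hconth.mono ?_).aestronglyMeasurable measurableSet_Ioc)
    · filter_upwards [ae_restrict_mem measurableSet_Ioc] with s hs
      have hs0 : 0 < s := hs.1
      have hst : s < t := lt_of_le_of_lt hs.2 hmt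
      rw [Real.norm_of_nonneg (hnonneg s hs0 hst)]
      calc h s = s ^ (-a) * (t - s) ^ (-b') := rfl
        _ ≤ s ^ (-a) * m ^ (-b') := mul_le_mul_of_nonneg_left
            (Real.rpow_le_rpow_of_nonpos hm0 (by linarith [hs.2]) (by linarith))
            (Real.rpow_nonneg hs0.le _)
        _ = m ^ (-b') * s ^ (-a) := mul_comm _ _
    · intro s hs; exact ⟨hs.1, lt_of_le_of_lt hs.2 hmt⟩
  have hint2 : IntegrableOn h (Set.Ioo m t) := by
    apply Integrable.mono' ((int2.mono_set Set.Ioo_subset_Ioc_self).const_mul (m ^ (-a)))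
      ((hconth.mono ?_).aestronglyMeasurable measurableSet_Ioo)
    · filter_upwards [ae_restrict_mem measurableSet_Ioo] with s hs
      have hs0 : 0 < s := lt_trans hm0 hs.1
      rw [Real.norm_of_nonneg (hnonneg s hs0 hs.2)]
      calc h s = s ^ (-a) * (t - s) ^ (-b') := rfl
        _ ≤ m ^ (-a) * (t - s) ^ (-b') := mul_le_mul_of_nonneg_right
            (Real.rpow_le_rpow_of_nonpos hm0 hs.1.le (by linarith))
            (Real.rpow_nonneg (by linarith [hs.2]) _)
    · intro s hs; exact ⟨lt_trans hm0 hs.1, hs.2⟩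
  have hunion : Set.Ioc 0 m ∪ Set.Ioo m t = Set.Ioo 0 t := Set.Ioc_union_Ioo_eq_Ioo hm0.le hmt
  have hdisj : Disjoint (Set.Ioc 0 m) (Set.Ioo m t) :=
    (Set.Ioc_disjoint_Ioc_of_le le_rfl).mono_right Set.Ioo_subset_Ioc_self
  have hintall : IntegrableOn h (Set.Ioo 0 t) := by
    rw [← hunion]; exact hint1.union hint2
  -- values of the model integrals
  have val1 : ∫ s in Set.Ioc 0 m, s ^ (-a) = m ^ (1 - a) / (1 - a) := by
    rw [← intervalIntegral.integral_of_le hm0.le,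
      integral_rpow (Or.inl (by linarith : (-1 : ℝ) < -a))]
    rw [Real.zero_rpow (by linarith : -a + 1 ≠ 0), show -a + 1 = 1 - a by ring]
    ring
  have val2 : ∫ s in Set.Ioo m t, (t - s) ^ (-b') = m ^ (1 - b') / (1 - b') := by
    rw [← integral_Ioc_eq_integral_Ioo, ← intervalIntegral.integral_of_le hmt.le,
      intervalIntegral.integral_comp_sub_left (fun u : ℝ => u ^ (-b')) t, sub_self, htm,
      integral_rpow (Or.inl (by linarith : (-1 : ℝ) < -b')),
      Real.zero_rpow (by linarith : -b' + 1 ≠ 0), show -b' + 1 = 1 - b' by ring]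
    ring
  -- bounds on the two pieces
  have hbd1 : ∫ s in Set.Ioc 0 m, h s ≤ m ^ (-b') * (m ^ (1 - a) / (1 - a)) := by
    calc ∫ s in Set.Ioc 0 m, h s ≤ ∫ s in Set.Ioc 0 m, m ^ (-b') * s ^ (-a) := by
          apply integral_mono_of_nonneg ?_ (int1.const_mul _) ?_
          · filter_upwards [ae_restrict_mem measurableSet_Ioc] with s hs
            exact hnonneg s hs.1 (lt_of_le_of_lt hs.2 hmt)
          · filter_upwards [ae_restrict_mem measurableSet_Ioc] with s hs
            calc h s = s ^ (-a) * (t - s) ^ (-b') := rfl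
              _ ≤ s ^ (-a) * m ^ (-b') := mul_le_mul_of_nonneg_left
                  (Real.rpow_le_rpow_of_nonpos hm0 (by linarith [hs.2]) (by linarith))
                  (Real.rpow_nonneg hs.1.le _)
              _ = m ^ (-b') * s ^ (-a) := mul_comm _ _
      _ = m ^ (-b') * (m ^ (1 - a) / (1 - a)) := by rw [MeasureTheory.integral_const_mul, val1]
  have hbd2 : ∫ s in Set.Ioo m t, h s ≤ m ^ (-a) * (m ^ (1 - b') / (1 - b')) := by
    calc ∫ s in Set.Ioo m t, h s ≤ ∫ s in Set.Ioo m t, m ^ (-a) * (t - s) ^ (-b') := by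
          apply integral_mono_of_nonneg ?_
            ((int2.mono_set Set.Ioo_subset_Ioc_self).const_mul _) ?_
          · filter_upwards [ae_restrict_mem measurableSet_Ioo] with s hs
            exact hnonneg s (lt_trans hm0 hs.1) hs.2
          · filter_upwards [ae_restrict_mem measurableSet_Ioo] with s hs
            calc h s = s ^ (-a) * (t - s) ^ (-b') := rfl
              _ ≤ m ^ (-a) * (t - s) ^ (-b') := mul_le_mul_of_nonneg_right
                  (Real.rpow_le_rpow_of_nonpos hm0 hs.1.le (by linarith))
                  (Real.rpow_nonneg (by linarith [hs.2]) _)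
      _ = m ^ (-a) * (m ^ (1 - b') / (1 - b')) := by rw [MeasureTheory.integral_const_mul, val2]
  -- combine: beta-type integral bound
  have hJ : ∫ s in Set.Ioo 0 t, h s ≤ m ^ (1 - a - b') * ((1 - a)⁻¹ + (1 - b')⁻¹) := by
    have hsplit : ∫ s in Set.Ioo 0 t, h s
        = (∫ s in Set.Ioc 0 m, h s) + ∫ s in Set.Ioo m t, h s := by
      rw [← hunion]; exact setIntegral_union hdisj measurableSet_Ioo hint1 hint2
    have e1 : m ^ (-b') * (m ^ (1 - a) / (1 - a)) = m ^ (1 - a - b') * (1 - a)⁻¹ := by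
      rw [show (1 : ℝ) - a - b' = -b' + (1 - a) by ring, Real.rpow_add hm0]
      ring
    have e2 : m ^ (-a) * (m ^ (1 - b') / (1 - b')) = m ^ (1 - a - b') * (1 - b')⁻¹ := by
      rw [show (1 : ℝ) - a - b' = -a + (1 - b') by ring, Real.rpow_add hm0]
      ring
    rw [hsplit]
    calc (∫ s in Set.Ioc 0 m, h s) + ∫ s in Set.Ioo m t, h s
        ≤ m ^ (-b') * (m ^ (1 - a) / (1 - a)) + m ^ (-a) * (m ^ (1 - b') / (1 - b')) :=
          add_le_add hbd1 hbd2
      _ = m ^ (1 - a - b') * ((1 - a)⁻¹ + (1 - b')⁻¹) := by rw [e1, e2]; ring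
  -- main pointwise estimate
  have hmain : (∫ s in Set.Ioo 0 t, Real.exp (L * s) * s ^ (-a) * (t - s) ^ (-b))
      ≤ Real.exp (L * t) * L ^ (-ε) * ∫ s in Set.Ioo 0 t, h s := by
    calc (∫ s in Set.Ioo 0 t, Real.exp (L * s) * s ^ (-a) * (t - s) ^ (-b))
        ≤ ∫ s in Set.Ioo 0 t, Real.exp (L * t) * L ^ (-ε) * h s := by
          apply integral_mono_of_nonneg ?_ (hintall.const_mul _) ?_
          · filter_upwards [ae_restrict_mem measurableSet_Ioo] with s hs
            exact mul_nonneg (mul_nonneg (Real.exp_nonneg _) (Real.rpow_nonneg hs.1.le _))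
              (Real.rpow_nonneg (by linarith [hs.2]) _)
          · filter_upwards [ae_restrict_mem measurableSet_Ioo] with s hs
            have hts : 0 < t - s := by linarith [hs.2]
            have h1 : Real.exp (L * s) = Real.exp (L * t) * Real.exp (-(L * (t - s))) := by
              rw [← Real.exp_add]; ring_nf
            have h2 : Real.exp (-(L * (t - s))) ≤ (L * (t - s)) ^ (-ε) :=
              exp_neg_le_rpow_neg hε0 hε1 (by positivity)
            have h3 : (L * (t - s)) ^ (-ε) = L ^ (-ε) * (t - s) ^ (-ε) :=
              Real.mul_rpow hL0.le hts.le
            have key : Real.exp (-(L * (t - s))) ≤ L ^ (-ε) * (t - s) ^ (-ε) := h3 ▸ h2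
            have h4 : (t - s) ^ (-ε) * (t - s) ^ (-b) = (t - s) ^ (-b') := by
              rw [← Real.rpow_add hts, show -ε + -b = -b' by rw [hb'def]; ring]
            calc Real.exp (L * s) * s ^ (-a) * (t - s) ^ (-b)
                = Real.exp (-(L * (t - s))) * (s ^ (-a) * (t - s) ^ (-b)) * Real.exp (L * t) := by
                  rw [h1]; ring
              _ ≤ L ^ (-ε) * (t - s) ^ (-ε) * (s ^ (-a) * (t - s) ^ (-b)) * Real.exp (L * t) := by
                  apply mul_le_mul_of_nonneg_right
                    (mul_le_mul_of_nonneg_right key (mul_nonneg (Real.rpow_nonneg hs.1.le _)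
                      (Real.rpow_nonneg hts.le _))) (Real.exp_nonneg _)
              _ = Real.exp (L * t) * L ^ (-ε) * (s ^ (-a) * ((t - s) ^ (-ε) * (t - s) ^ (-b))) := by
                  ring
              _ = Real.exp (L * t) * L ^ (-ε) * h s := by rw [h4]
      _ = Real.exp (L * t) * L ^ (-ε) * ∫ s in Set.Ioo 0 t, h s := integral_const_mul _ _
  -- assemble
  have hJ0 : 0 ≤ ∫ s in Set.Ioo 0 t, h s := by
    apply MeasureTheory.integral_nonneg_of_ae
    filter_upwards [ae_restrict_mem measurableSet_Ioo] with s hs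
    exact hnonneg s hs.1 hs.2
  have hexp : Real.exp (-L * t) * Real.exp (L * t) = 1 := by
    rw [← Real.exp_add]; ring_nf; exact Real.exp_zero
  have step1 : Real.exp (-L * t) * t ^ γ *
      (∫ s in Set.Ioo 0 t, Real.exp (L * s) * s ^ (-a) * (t - s) ^ (-b))
      ≤ t ^ γ * L ^ (-ε) * ∫ s in Set.Ioo 0 t, h s := by
    calc Real.exp (-L * t) * t ^ γ *
          (∫ s in Set.Ioo 0 t, Real.exp (L * s) * s ^ (-a) * (t - s) ^ (-b))
        ≤ Real.exp (-L * t) * t ^ γ *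
          (Real.exp (L * t) * L ^ (-ε) * ∫ s in Set.Ioo 0 t, h s) := by
          apply mul_le_mul_of_nonneg_left hmain
            (mul_nonneg (Real.exp_nonneg _) (Real.rpow_nonneg ht0.le _))
      _ = (Real.exp (-L * t) * Real.exp (L * t)) * (t ^ γ * L ^ (-ε) *
            ∫ s in Set.Ioo 0 t, h s) := by ring
      _ = t ^ γ * L ^ (-ε) * ∫ s in Set.Ioo 0 t, h s := by rw [hexp, one_mul]
  have hmval : m ^ (1 - a - b') = t ^ (1 - a - b') / (2 : ℝ) ^ (1 - a - b') := by
    rw [hmdef, Real.div_rpow ht0.le (by norm_num : (0 : ℝ) ≤ 2)]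
  have htq : t ^ γ * t ^ (1 - a - b') = t ^ q := by rw [hqdef, Real.rpow_add ht0]
  have htqM : t ^ q ≤ (max 1 T) ^ q :=
    Real.rpow_le_rpow ht0.le (le_trans htT.le (le_max_right 1 T)) hq0.le
  have step2 : t ^ γ * L ^ (-ε) * (∫ s in Set.Ioo 0 t, h s) ≤ C * L ^ (-ε) := by
    have hLε : 0 ≤ L ^ (-ε) := Real.rpow_nonneg hL0.le _
    have h2p : 0 < (2 : ℝ) ^ (1 - a - b') := Real.rpow_pos_of_pos two_pos _
    have hD0 : 0 ≤ (1 - a)⁻¹ + (1 - b')⁻¹ := by positivity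
    calc t ^ γ * L ^ (-ε) * (∫ s in Set.Ioo 0 t, h s)
        ≤ t ^ γ * L ^ (-ε) * (m ^ (1 - a - b') * ((1 - a)⁻¹ + (1 - b')⁻¹)) := by
          apply mul_le_mul_of_nonneg_left hJ
            (mul_nonneg (Real.rpow_nonneg ht0.le _) hLε)
      _ = (t ^ γ * t ^ (1 - a - b')) / (2 : ℝ) ^ (1 - a - b')
          * ((1 - a)⁻¹ + (1 - b')⁻¹) * L ^ (-ε) := by rw [hmval]; ring
      _ = t ^ q / (2 : ℝ) ^ (1 - a - b') * ((1 - a)⁻¹ + (1 - b')⁻¹) * L ^ (-ε) := by rw [htq]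
      _ ≤ (max 1 T) ^ q / (2 : ℝ) ^ (1 - a - b') * ((1 - a)⁻¹ + (1 - b')⁻¹) * L ^ (-ε) := by
          apply mul_le_mul_of_nonneg_right _ hLε
          apply mul_le_mul_of_nonneg_right _ hD0
          exact div_le_div_of_nonneg_right htqM h2p.le
      _ = C * L ^ (-ε) := by rw [hCdef]
  exact le_trans (le_trans step1 step2) hCL
end

section
/- Let 0 < μ < 1, 0 ≤ a < 1, 0 ≤ b < 1 and L > 0. Then for every t > 0, ∫_0^t e^{Ls} s^{−a} (t−s)^{−b} ds ≤ (1/(1−a)) (1−μ)^{−b} μ^{1−a} t^{1−a−b} e^{Lt} + μ^{−a−b} t^{−a−b} (e^{Lt} − 1)/L + (1/(1−b)) (1−μ)^{−a} μ^{1−b} t^{1−a−b} e^{Lt}. -/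
open MeasureTheory Real Set intervalIntegral

set_option maxHeartbeats 1000000 in
theorem stmt_12 (μ a b L : ℝ) (hμ0 : 0 < μ) (hμ1 : μ < 1) (ha0 : 0 ≤ a) (ha1 : a < 1)
    (hb0 : 0 ≤ b) (hb1 : b < 1) (hL : 0 < L) (t : ℝ) (ht : 0 < t) :
    ∫ s in Set.Ioo (0 : ℝ) t, Real.exp (L * s) * s ^ (-a) * (t - s) ^ (-b)
      ≤ (1 / (1 - a)) * (1 - μ) ^ (-b) * μ ^ (1 - a) * t ^ (1 - a - b) * Real.exp (L * t)
        + μ ^ (-a - b) * t ^ (-a - b) * (Real.exp (L * t) - 1) / L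
        + (1 / (1 - b)) * (1 - μ) ^ (-a) * μ ^ (1 - b) * t ^ (1 - a - b) * Real.exp (L * t) := by
  have h1a : (0:ℝ) < 1 - a := by linarith
  have h1b : (0:ℝ) < 1 - b := by linarith
  have h1μ : (0:ℝ) < 1 - μ := by linarith
  have hμt : 0 < μ * t := mul_pos hμ0 ht
  have h1μt : 0 < (1 - μ) * t := mul_pos h1μ ht
  set f : ℝ → ℝ := fun s => Real.exp (L * s) * s ^ (-a) * (t - s) ^ (-b) with hfdef
  have hm : Measurable f := by fun_prop
  -- master integrability on Ioc 0 t
  have hIntA : IntegrableOn f (Set.Ioc 0 (t/2)) := by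
    apply Integrable.mono' (g := fun s => (Real.exp (L*t) * (t/2) ^ (-b)) * s ^ (-a))
    · exact ((intervalIntegral.intervalIntegrable_rpow' (show (-1:ℝ) < -a by linarith)
        (a := 0) (b := t/2)).const_mul _).1
    · exact (hm.aestronglyMeasurable).restrict
    · filter_upwards [ae_restrict_mem measurableSet_Ioc] with s hs
      have hs0 : 0 < s := hs.1
      have hst : s ≤ t/2 := hs.2
      have hts : 0 < t - s := by linarith
      have h2 : (t - s) ^ (-b) ≤ (t/2) ^ (-b) :=
        Real.rpow_le_rpow_of_nonpos (by linarith) (by linarith) (by linarith)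
      have h1 : Real.exp (L*s) ≤ Real.exp (L*t) := by
        apply Real.exp_le_exp.mpr; nlinarith
      have h3 : (0:ℝ) ≤ s ^ (-a) := Real.rpow_nonneg hs0.le _
      rw [Real.norm_eq_abs, abs_of_nonneg (by positivity)]
      calc Real.exp (L*s) * s ^ (-a) * (t - s) ^ (-b)
          = (Real.exp (L*s) * (t - s) ^ (-b)) * s ^ (-a) := by ring
        _ ≤ (Real.exp (L*t) * (t/2) ^ (-b)) * s ^ (-a) := by
            apply mul_le_mul_of_nonneg_right _ h3
            exact mul_le_mul h1 h2 (Real.rpow_nonneg hts.le _) (Real.exp_pos _).le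
  have hIntB : IntegrableOn f (Set.Ioc (t/2) t) := by
    apply Integrable.mono' (g := fun s => (Real.exp (L*t) * (t/2) ^ (-a)) * (t - s) ^ (-b))
    · have := ((intervalIntegral.intervalIntegrable_rpow' (show (-1:ℝ) < -b by linarith)
        (a := 0) (b := t/2)).comp_sub_left t).const_mul (Real.exp (L*t) * (t/2) ^ (-a))
      have e1 : t - t/2 = t/2 := by ring
      have e2 : t - 0 = t := by ring
      rw [e1, e2] at this
      exact this.2
    · exact (hm.aestronglyMeasurable).restrict
    · filter_upwards [ae_restrict_mem measurableSet_Ioc] with s hs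
      have hs0 : 0 < s := lt_of_le_of_lt (by linarith) hs.1
      have hts : 0 ≤ t - s := by linarith [hs.2]
      have h2 : s ^ (-a) ≤ (t/2) ^ (-a) :=
        Real.rpow_le_rpow_of_nonpos (by linarith) hs.1.le (by linarith)
      have h1 : Real.exp (L*s) ≤ Real.exp (L*t) := by
        apply Real.exp_le_exp.mpr; nlinarith [hs.2]
      rw [Real.norm_eq_abs, abs_of_nonneg (by positivity)]
      calc Real.exp (L*s) * s ^ (-a) * (t - s) ^ (-b)
          = (Real.exp (L*s) * s ^ (-a)) * (t - s) ^ (-b) := by ring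
        _ ≤ (Real.exp (L*t) * (t/2) ^ (-a)) * (t - s) ^ (-b) := by
            apply mul_le_mul_of_nonneg_right _ (Real.rpow_nonneg hts _)
            exact mul_le_mul h1 h2 (Real.rpow_nonneg hs0.le _) (Real.exp_pos _).le
  have hInt : IntervalIntegrable f volume 0 t := by
    rw [intervalIntegrable_iff_integrableOn_Ioc_of_le ht.le]
    have : Set.Ioc (0:ℝ) t = Set.Ioc 0 (t/2) ∪ Set.Ioc (t/2) t := by
      rw [Set.Ioc_union_Ioc_eq_Ioc (by linarith) (by linarith)]
    rw [this]
    exact hIntA.union hIntB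
  -- sub-interval integrabilities
  have hsub : ∀ c d : ℝ, 0 ≤ c → c ≤ t → 0 ≤ d → d ≤ t → IntervalIntegrable f volume c d := by
    intro c d hc hct hd hdt
    apply hInt.mono_set
    apply Set.uIcc_subset_uIcc <;> rw [Set.mem_uIcc] <;> left <;> constructor <;> linarith
  have hI1int : IntervalIntegrable f volume 0 (μ*t) := hsub _ _ le_rfl ht.le hμt.le (by nlinarith)
  have hI2int : IntervalIntegrable f volume (μ*t) ((1-μ)*t) :=
    hsub _ _ hμt.le (by nlinarith) h1μt.le (by nlinarith)
  have hI3int : IntervalIntegrable f volume ((1-μ)*t) t := hsub _ _ h1μt.le (by nlinarith) ht.le le_rfl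
  -- rewrite LHS
  have hLHS : (∫ s in Set.Ioo (0 : ℝ) t, f s) = ∫ s in (0:ℝ)..t, f s := by
    rw [intervalIntegral.integral_of_le ht.le, MeasureTheory.integral_Ioc_eq_integral_Ioo]
  have hsplit : (∫ s in (0:ℝ)..t, f s)
      = (∫ s in (0:ℝ)..(μ*t), f s) + (∫ s in (μ*t)..((1-μ)*t), f s)
        + (∫ s in ((1-μ)*t)..t, f s) := by
    rw [intervalIntegral.integral_add_adjacent_intervals hI1int hI2int,
        intervalIntegral.integral_add_adjacent_intervals
          (hsub _ _ le_rfl ht.le h1μt.le (by nlinarith)) hI3int]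
  -- bound I1
  have hI1 : (∫ s in (0:ℝ)..(μ*t), f s)
      ≤ (1 / (1 - a)) * (1 - μ) ^ (-b) * μ ^ (1 - a) * t ^ (1 - a - b) * Real.exp (L * t) := by
    have hmono : ∀ s ∈ Set.Icc (0:ℝ) (μ*t), f s
        ≤ (Real.exp (L*t) * ((1-μ)*t) ^ (-b)) * s ^ (-a) := by
      intro s hs
      have h2 : (t - s) ^ (-b) ≤ ((1-μ)*t) ^ (-b) :=
        Real.rpow_le_rpow_of_nonpos h1μt (by nlinarith [hs.2]) (by linarith)
      have h1 : Real.exp (L*s) ≤ Real.exp (L*t) := by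
        apply Real.exp_le_exp.mpr; nlinarith [hs.2]
      have h3 : (0:ℝ) ≤ s ^ (-a) := Real.rpow_nonneg hs.1 _
      calc Real.exp (L*s) * s ^ (-a) * (t - s) ^ (-b)
          = (Real.exp (L*s) * (t - s) ^ (-b)) * s ^ (-a) := by ring
        _ ≤ (Real.exp (L*t) * ((1-μ)*t) ^ (-b)) * s ^ (-a) := by
            apply mul_le_mul_of_nonneg_right _ h3
            exact mul_le_mul h1 h2 (Real.rpow_nonneg (by nlinarith [hs.2]) _) (Real.exp_pos _).le
    have hgint : IntervalIntegrable (fun s => (Real.exp (L*t) * ((1-μ)*t) ^ (-b)) * s ^ (-a))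
        volume 0 (μ*t) :=
      (intervalIntegral.intervalIntegrable_rpow' (show (-1:ℝ) < -a by linarith)).const_mul _
    have := intervalIntegral.integral_mono_on hμt.le hI1int hgint hmono
    refine this.trans ?_
    rw [intervalIntegral.integral_const_mul,
        integral_rpow (Or.inl (by linarith : (-1:ℝ) < -a)),
        Real.zero_rpow (by linarith : -a + 1 ≠ 0)]
    rw [Real.mul_rpow h1μ.le ht.le, Real.mul_rpow hμ0.le ht.le]
    have e1 : t ^ (-b) * t ^ (-a+1) = t ^ (1 - a - b) := by
      rw [← Real.rpow_add ht]; ring_nf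
    have e2 : -a + 1 = 1 - a := by ring
    rw [e2] at e1 ⊢
    apply le_of_eq
    rw [← e1]; field_simp; ring
  -- bound I2
  have hI2 : (∫ s in (μ*t)..((1-μ)*t), f s)
      ≤ μ ^ (-a - b) * t ^ (-a - b) * (Real.exp (L * t) - 1) / L := by
    have hRHS2 : 0 ≤ μ ^ (-a - b) * t ^ (-a - b) * (Real.exp (L * t) - 1) / L := by
      have : (1:ℝ) ≤ Real.exp (L*t) := by
        rw [← Real.exp_zero]; exact Real.exp_le_exp.mpr (by positivity)
      have h1 : (0:ℝ) ≤ μ ^ (-a-b) := Real.rpow_nonneg hμ0.le _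
      have h2 : (0:ℝ) ≤ t ^ (-a-b) := Real.rpow_nonneg ht.le _
      apply div_nonneg _ hL.le
      exact mul_nonneg (mul_nonneg h1 h2) (by linarith)
    rcases le_or_gt (μ*t) ((1-μ)*t) with hc | hc
    · have hmono : ∀ s ∈ Set.Icc (μ*t) ((1-μ)*t), f s
          ≤ ((μ*t) ^ (-a) * (μ*t) ^ (-b)) * Real.exp (L*s) := by
        intro s hs
        have hs0 : 0 < s := lt_of_lt_of_le hμt hs.1
        have h2 : s ^ (-a) ≤ (μ*t) ^ (-a) :=
          Real.rpow_le_rpow_of_nonpos hμt hs.1 (by linarith)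
        have h3 : (t - s) ^ (-b) ≤ (μ*t) ^ (-b) :=
          Real.rpow_le_rpow_of_nonpos hμt (by nlinarith [hs.2]) (by linarith)
        calc Real.exp (L*s) * s ^ (-a) * (t - s) ^ (-b)
            = (s ^ (-a) * (t - s) ^ (-b)) * Real.exp (L*s) := by ring
          _ ≤ ((μ*t) ^ (-a) * (μ*t) ^ (-b)) * Real.exp (L*s) := by
              apply mul_le_mul_of_nonneg_right _ (Real.exp_pos _).le
              exact mul_le_mul h2 h3 (Real.rpow_nonneg (by nlinarith [hs.2]) _)
                (Real.rpow_nonneg hμt.le _)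
      have hgint : IntervalIntegrable (fun s => ((μ*t) ^ (-a) * (μ*t) ^ (-b)) * Real.exp (L*s))
          volume (μ*t) ((1-μ)*t) := by
        exact (continuous_const.mul
          (Real.continuous_exp.comp (continuous_const.mul continuous_id))).intervalIntegrable _ _
      have := intervalIntegral.integral_mono_on hc hI2int hgint hmono
      refine this.trans ?_
      rw [intervalIntegral.integral_const_mul]
      have hexp : (∫ s in (μ*t)..((1-μ)*t), Real.exp (L*s))
          = (Real.exp (L*((1-μ)*t)) - Real.exp (L*(μ*t))) / L := by
        rw [integral_comp_mul_left (fun u => Real.exp u) (ne_of_gt hL)]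
        rw [integral_exp, smul_eq_mul]
        field_simp
      rw [hexp]
      have hb1' : Real.exp (L*((1-μ)*t)) ≤ Real.exp (L*t) := by
        apply Real.exp_le_exp.mpr; nlinarith
      have hb2' : (1:ℝ) ≤ Real.exp (L*(μ*t)) := by
        rw [← Real.exp_zero]; apply Real.exp_le_exp.mpr; positivity
      have hC : (μ*t) ^ (-a) * (μ*t) ^ (-b) = μ ^ (-a-b) * t ^ (-a-b) := by
        rw [← Real.rpow_add hμt, Real.mul_rpow hμ0.le ht.le]
        ring_nf
      rw [hC]
      have hCnn : (0:ℝ) ≤ μ ^ (-a-b) * t ^ (-a-b) := by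
        have h1 : (0:ℝ) ≤ μ ^ (-a-b) := Real.rpow_nonneg hμ0.le _
        have h2 : (0:ℝ) ≤ t ^ (-a-b) := Real.rpow_nonneg ht.le _
        positivity
      have hstep : (Real.exp (L*((1-μ)*t)) - Real.exp (L*(μ*t))) / L
          ≤ (Real.exp (L*t) - 1) / L := by
        gcongr
      calc μ ^ (-a-b) * t ^ (-a-b) * ((Real.exp (L*((1-μ)*t)) - Real.exp (L*(μ*t))) / L)
          ≤ μ ^ (-a-b) * t ^ (-a-b) * ((Real.exp (L*t) - 1) / L) :=
            mul_le_mul_of_nonneg_left hstep hCnn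
        _ = μ ^ (-a - b) * t ^ (-a - b) * (Real.exp (L * t) - 1) / L := by ring
    · have : (∫ s in (μ*t)..((1-μ)*t), f s) ≤ 0 := by
        rw [intervalIntegral.integral_symm]
        simp only [neg_nonpos]
        apply intervalIntegral.integral_nonneg hc.le
        intro s hs
        have hs0 : 0 < s := lt_of_lt_of_le h1μt hs.1
        have hts : 0 < t - s := by nlinarith [hs.2]
        have := Real.rpow_nonneg hs0.le (-a)
        have := Real.rpow_nonneg hts.le (-b)
        have := (Real.exp_pos (L*s)).le
        show 0 ≤ Real.exp (L*s) * s ^ (-a) * (t-s) ^ (-b)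
        positivity
      linarith
  -- bound I3
  have hI3 : (∫ s in ((1-μ)*t)..t, f s)
      ≤ (1 / (1 - b)) * (1 - μ) ^ (-a) * μ ^ (1 - b) * t ^ (1 - a - b) * Real.exp (L * t) := by
    have hmono : ∀ s ∈ Set.Icc ((1-μ)*t) t, f s
        ≤ (Real.exp (L*t) * ((1-μ)*t) ^ (-a)) * (t - s) ^ (-b) := by
      intro s hs
      have hs0 : 0 < s := lt_of_lt_of_le h1μt hs.1
      have h2 : s ^ (-a) ≤ ((1-μ)*t) ^ (-a) :=
        Real.rpow_le_rpow_of_nonpos h1μt hs.1 (by linarith)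
      have h1 : Real.exp (L*s) ≤ Real.exp (L*t) := by
        apply Real.exp_le_exp.mpr; nlinarith [hs.2]
      have hts : (0:ℝ) ≤ t - s := by linarith [hs.2]
      calc Real.exp (L*s) * s ^ (-a) * (t - s) ^ (-b)
          = (Real.exp (L*s) * s ^ (-a)) * (t - s) ^ (-b) := by ring
        _ ≤ (Real.exp (L*t) * ((1-μ)*t) ^ (-a)) * (t - s) ^ (-b) := by
            apply mul_le_mul_of_nonneg_right _ (Real.rpow_nonneg hts _)
            exact mul_le_mul h1 h2 (Real.rpow_nonneg hs0.le _) (Real.exp_pos _).le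
    have hgint : IntervalIntegrable (fun s => (Real.exp (L*t) * ((1-μ)*t) ^ (-a)) * (t - s) ^ (-b))
        volume ((1-μ)*t) t := by
      have := ((intervalIntegral.intervalIntegrable_rpow' (show (-1:ℝ) < -b by linarith)
        (a := 0) (b := μ*t)).comp_sub_left t).const_mul (Real.exp (L*t) * ((1-μ)*t) ^ (-a))
      have e1 : t - μ*t = (1-μ)*t := by ring
      have e2 : t - 0 = t := by ring
      rw [e1, e2] at this
      exact this.symm
    have hord : (1-μ)*t ≤ t := by nlinarith
    have := intervalIntegral.integral_mono_on hord hI3int hgint hmono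
    refine this.trans ?_
    rw [intervalIntegral.integral_const_mul]
    have hsubint : (∫ s in ((1-μ)*t)..t, (t - s) ^ (-b)) = ∫ u in (0:ℝ)..(μ*t), u ^ (-b) := by
      rw [intervalIntegral.integral_comp_sub_left (fun u => u ^ (-b)) t]
      have e1 : t - t = 0 := by ring
      have e2 : t - (1-μ)*t = μ*t := by ring
      rw [e1, e2]
    rw [hsubint, integral_rpow (Or.inl (by linarith : (-1:ℝ) < -b)),
        Real.zero_rpow (by linarith : -b + 1 ≠ 0)]
    rw [Real.mul_rpow h1μ.le ht.le, Real.mul_rpow hμ0.le ht.le]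
    have e1 : t ^ (-a) * t ^ (-b+1) = t ^ (1 - a - b) := by
      rw [← Real.rpow_add ht]; ring_nf
    have e2 : -b + 1 = 1 - b := by ring
    rw [e2] at e1 ⊢
    apply le_of_eq
    rw [← e1]; field_simp; ring
  calc (∫ s in Set.Ioo (0 : ℝ) t, f s) = _ := hLHS
    _ = _ := hsplit
    _ ≤ _ := by
      have := add_le_add (add_le_add hI1 hI2) hI3
      linarith
end
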